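/- arXiv:2304.01661 — 5 statements merged into one kernel-verified Lean document; each statement's English description precedes it below -/
import Mathlib

section
/- Let Q, K, M be positive integers, let H_q ∈ ℂ^{K×M} for q = 0,…,Q−1, and let B ∈ ℂ^{K×K} be a diagonal matrix with positive real diagonal entries. Suppose p ∈ ℝ^M has all entries p_m > 0, that for each q the K×K matrix H_q D_p^{1/2} H_q^H is invertible, and that p satisfies the fixed-point equations p_m = Σ_{k=0}^{K−1} Σ_{q=0}^{Q−1} |[D_p^{1/2} H_q^H (H_q D_p^{1/2} H_q^H)^{−1} B]_{m,k}|² for every m. Then the matrices W_q = D_p^{1/2} H_q^H (H_q D_p^{1/2} H_q^H)^{−1} B satisfy H_q W_q = B for all q, and for every family of matrices V_q ∈ ℂ^{M×K} with H_q V_q = B for all q one has Σ_{m=0}^{M−1} (Σ_{k=0}^{K−1} Σ_{q=0}^{Q−1} |[V_q]_{m,k}|²)^{1/2} ≥ Σ_{m=0}^{M−1} p_m^{1/2}; in particular, the family (W_q)_q globally minimizes the objective Σ_m (Σ_{k,q} |[W_q]_{m,k}|²)^{1/2} subject to the zero-forcing constraints H_q W_q = B for all q. -/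
open Matrix BigOperators

private lemma cs_re {ι : Type*} [Fintype ι] (f g : ι → ℂ) :
    (∑ i, (starRingEnd ℂ) (f i) * g i).re ≤
      Real.sqrt (∑ i, ‖f i‖ ^ 2) * Real.sqrt (∑ i, ‖g i‖ ^ 2) := by
  classical
  let x : EuclideanSpace ℂ ι := WithLp.toLp 2 f
  let y : EuclideanSpace ℂ ι := WithLp.toLp 2 g
  have h1 : (∑ i, (starRingEnd ℂ) (f i) * g i) = inner ℂ x y := by
    rw [PiLp.inner_apply]
    simp [x, y, RCLike.inner_apply, mul_comm]
  have h2 : ‖(inner ℂ x y : ℂ)‖ ≤ ‖x‖ * ‖y‖ := norm_inner_le_norm (𝕜 := ℂ) x y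
  have h3 : ‖x‖ = Real.sqrt (∑ i, ‖f i‖ ^ 2) := by
    rw [EuclideanSpace.norm_eq]
  have h4 : ‖y‖ = Real.sqrt (∑ i, ‖g i‖ ^ 2) := by
    rw [EuclideanSpace.norm_eq]
  calc (∑ i, (starRingEnd ℂ) (f i) * g i).re ≤ ‖(∑ i, (starRingEnd ℂ) (f i) * g i)‖ :=
        Complex.re_le_norm _
    _ = ‖(inner ℂ x y : ℂ)‖ := by rw [h1]
    _ ≤ ‖x‖ * ‖y‖ := h2
    _ = _ := by rw [h3, h4]

/-- The precoder `W_q = D_p^{1/2} H_q^H (H_q D_p^{1/2} H_q^H)⁻¹ B`, where `p` solves the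
fixed-point equations, satisfies the zero-forcing constraints and globally minimizes the
PA power objective `∑_m (∑_{k,q} |[V_q]_{m,k}|²)^{1/2}` among all zero-forcing precoders. -/
theorem stmt0 (Q K M : ℕ) (hQ : 0 < Q) (hK : 0 < K) (hM : 0 < M)
    (H : Fin Q → Matrix (Fin K) (Fin M) ℂ)
    (b : Fin K → ℝ) (hb : ∀ k, 0 < b k)
    (B : Matrix (Fin K) (Fin K) ℂ) (hB : B = Matrix.diagonal (fun k => (b k : ℂ)))
    (p : Fin M → ℝ) (hp : ∀ m, 0 < p m)
    (Dp : Matrix (Fin M) (Fin M) ℂ)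
    (hDp : Dp = Matrix.diagonal (fun m => (Real.sqrt (p m) : ℂ)))
    (hinv : ∀ q, IsUnit (H q * Dp * (H q)ᴴ))
    (W : Fin Q → Matrix (Fin M) (Fin K) ℂ)
    (hW : ∀ q, W q = Dp * (H q)ᴴ * (H q * Dp * (H q)ᴴ)⁻¹ * B)
    (hfp : ∀ m, p m = ∑ k : Fin K, ∑ q : Fin Q, ‖(W q) m k‖ ^ 2) :
    (∀ q, H q * W q = B) ∧
      (∀ V : Fin Q → Matrix (Fin M) (Fin K) ℂ, (∀ q, H q * V q = B) →
        ∑ m : Fin M, Real.sqrt (p m) ≤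
          ∑ m : Fin M, Real.sqrt (∑ k : Fin K, ∑ q : Fin Q, ‖(V q) m k‖ ^ 2)) := by
  classical
  have hA : ∀ q, (H q * Dp * (H q)ᴴ) * (H q * Dp * (H q)ᴴ)⁻¹ = 1 := fun q =>
    Matrix.mul_nonsing_inv _ ((Matrix.isUnit_iff_isUnit_det _).mp (hinv q))
  have hZF : ∀ q, H q * W q = B := by
    intro q
    have h : H q * W q = (H q * Dp * (H q)ᴴ) * ((H q * Dp * (H q)ᴴ)⁻¹ * B) := by
      rw [hW q]; simp only [Matrix.mul_assoc]
    rw [h, ← Matrix.mul_assoc, hA q, Matrix.one_mul]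
  refine ⟨hZF, ?_⟩
  intro V hV
  set e : Fin M → ℂ := fun m => Complex.ofReal ((Real.sqrt (p m))⁻¹) with he
  set E : Matrix (Fin M) (Fin M) ℂ := Matrix.diagonal e with hEdef
  have hsq : ∀ m, Real.sqrt (p m) ≠ 0 := fun m => ne_of_gt (Real.sqrt_pos.mpr (hp m))
  have hDpE : Dp * E = 1 := by
    rw [hDp, hEdef, Matrix.diagonal_mul_diagonal, ← Matrix.diagonal_one]
    rw [Matrix.diagonal_eq_diagonal_iff]
    intro m
    simp only [he]
    rw [← Complex.ofReal_mul, mul_inv_cancel₀ (hsq m), Complex.ofReal_one]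
  have hDpH : Dpᴴ = Dp := by
    rw [hDp, Matrix.diagonal_conjTranspose]
    rw [Matrix.diagonal_eq_diagonal_iff]
    intro m
    simp [Pi.star_apply, Complex.star_def, Complex.conj_ofReal]
  -- key identity
  have hkey : ∀ q (C : Matrix (Fin M) (Fin K) ℂ), H q * C = B →
      (W q)ᴴ * E * C = Bᴴ * ((H q * Dp * (H q)ᴴ)⁻¹)ᴴ * B := by
    intro q C hC
    have h1 : (W q)ᴴ = Bᴴ * (((H q * Dp * (H q)ᴴ)⁻¹)ᴴ * (H q * Dp)) := by
      rw [hW q]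
      simp only [Matrix.conjTranspose_mul, Matrix.conjTranspose_conjTranspose, hDpH,
        Matrix.mul_assoc]
    have h2 : H q * Dp * E = H q := by rw [Matrix.mul_assoc, hDpE, Matrix.mul_one]
    calc (W q)ᴴ * E * C = (Bᴴ * ((H q * Dp * (H q)ᴴ)⁻¹)ᴴ) * ((H q * Dp * E) * C) := by
          rw [h1]; simp only [Matrix.mul_assoc]
      _ = (Bᴴ * ((H q * Dp * (H q)ᴴ)⁻¹)ᴴ) * B := by rw [h2, hC]
  -- trace expansion
  have htr : ∀ q (C : Matrix (Fin M) (Fin K) ℂ),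
      Matrix.trace ((W q)ᴴ * E * C) =
        ∑ k : Fin K, ∑ m : Fin M, (starRingEnd ℂ) (W q m k) * e m * C m k := by
    intro q C
    have expand : ∀ (X : Matrix (Fin K) (Fin M) ℂ) (C : Matrix (Fin M) (Fin K) ℂ),
        Matrix.trace (X * C) = ∑ k : Fin K, ∑ m : Fin M, X k m * C m k := by
      intro X C
      simp [Matrix.trace, Matrix.diag, Matrix.mul_apply]
    rw [expand ((W q)ᴴ * E) C]
    refine Finset.sum_congr rfl fun k _ => Finset.sum_congr rfl fun m _ => ?_
    rw [hEdef, Matrix.mul_diagonal, Matrix.conjTranspose_apply]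
    rfl
  -- scalar helpers
  have hterm : ∀ (m : Fin M) (w z : ℂ), ((starRingEnd ℂ) w * e m * z).re =
      (Real.sqrt (p m))⁻¹ * ((starRingEnd ℂ) w * z).re := by
    intro m w z
    have h : (starRingEnd ℂ) w * e m * z =
        (((Real.sqrt (p m))⁻¹ : ℝ) : ℂ) * ((starRingEnd ℂ) w * z) := by
      simp only [he]; ring
    rw [h, Complex.re_ofReal_mul]
  have htermW : ∀ (m : Fin M) (w : ℂ), ((starRingEnd ℂ) w * e m * w).re =
      (Real.sqrt (p m))⁻¹ * ‖w‖ ^ 2 := by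
    intro m w
    have h : (starRingEnd ℂ) w * e m * w =
        (((Real.sqrt (p m))⁻¹ * ‖w‖ ^ 2 : ℝ) : ℂ) := by
      have habs : ((‖w‖ ^ 2 : ℝ) : ℂ) = w * (starRingEnd ℂ) w := by
        rw [Complex.sq_norm, Complex.mul_conj]
      simp only [he]
      rw [Complex.ofReal_mul, habs]
      ring
    rw [h, Complex.ofReal_re]
  -- equality of the two traces
  have hTeq : (∑ q, Matrix.trace ((W q)ᴴ * E * W q)) =
      (∑ q, Matrix.trace ((W q)ᴴ * E * V q)) := by
    apply Finset.sum_congr rfl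
    intro q _
    rw [hkey q (W q) (hZF q), hkey q (V q) (hV q)]
  -- LHS evaluation
  have hinvp : ∀ m, (Real.sqrt (p m))⁻¹ * p m = Real.sqrt (p m) := by
    intro m
    rw [inv_mul_eq_div, div_eq_iff (hsq m)]
    exact (Real.mul_self_sqrt (hp m).le).symm
  have hLHS : (∑ q, Matrix.trace ((W q)ᴴ * E * W q)).re = ∑ m, Real.sqrt (p m) := by
    rw [Complex.re_sum]
    have h1 : ∀ q : Fin Q, (Matrix.trace ((W q)ᴴ * E * W q)).re =
        ∑ k : Fin K, ∑ m : Fin M, (Real.sqrt (p m))⁻¹ * ‖W q m k‖ ^ 2 := by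
      intro q
      rw [htr, Complex.re_sum]
      refine Finset.sum_congr rfl fun k _ => ?_
      rw [Complex.re_sum]
      exact Finset.sum_congr rfl fun m _ => htermW m _
    rw [Finset.sum_congr rfl fun q _ => h1 q, Finset.sum_comm]
    rw [Finset.sum_congr rfl fun k (_ : k ∈ Finset.univ) =>
      (Finset.sum_comm : ∑ q : Fin Q, ∑ m : Fin M,
        (Real.sqrt (p m))⁻¹ * ‖W q m k‖ ^ 2 = _), Finset.sum_comm]
    refine Finset.sum_congr rfl fun m _ => ?_
    simp only [← Finset.mul_sum]
    rw [← hfp m, hinvp m]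
  -- RHS bound
  have hRHS : (∑ q, Matrix.trace ((W q)ᴴ * E * V q)).re ≤
      ∑ m : Fin M, Real.sqrt (∑ k : Fin K, ∑ q : Fin Q, ‖(V q) m k‖ ^ 2) := by
    rw [Complex.re_sum]
    have h1 : ∀ q : Fin Q, (Matrix.trace ((W q)ᴴ * E * V q)).re =
        ∑ k : Fin K, ∑ m : Fin M,
          (Real.sqrt (p m))⁻¹ * ((starRingEnd ℂ) (W q m k) * V q m k).re := by
      intro q
      rw [htr, Complex.re_sum]
      refine Finset.sum_congr rfl fun k _ => ?_
      rw [Complex.re_sum]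
      exact Finset.sum_congr rfl fun m _ => hterm m _ _
    rw [Finset.sum_congr rfl fun q _ => h1 q, Finset.sum_comm]
    rw [Finset.sum_congr rfl fun k (_ : k ∈ Finset.univ) =>
      (Finset.sum_comm : ∑ q : Fin Q, ∑ m : Fin M,
        (Real.sqrt (p m))⁻¹ * ((starRingEnd ℂ) (W q m k) * V q m k).re = _), Finset.sum_comm]
    refine Finset.sum_le_sum fun m _ => ?_
    simp only [← Finset.mul_sum]
    have hcs : (∑ k : Fin K, ∑ q : Fin Q, ((starRingEnd ℂ) (W q m k) * V q m k).re) ≤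
        Real.sqrt (p m) *
          Real.sqrt (∑ k : Fin K, ∑ q : Fin Q, ‖(V q) m k‖ ^ 2) := by
      have hre : (∑ k : Fin K, ∑ q : Fin Q, ((starRingEnd ℂ) (W q m k) * V q m k).re) =
          (∑ i : Fin K × Fin Q, (starRingEnd ℂ) (W i.2 m i.1) * V i.2 m i.1).re := by
        rw [Complex.re_sum, Fintype.sum_prod_type]
      rw [hre]
      have := cs_re (fun i : Fin K × Fin Q => W i.2 m i.1) (fun i : Fin K × Fin Q => V i.2 m i.1)
      have hfw : (∑ i : Fin K × Fin Q, ‖W i.2 m i.1‖ ^ 2) = p m := by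
        rw [Fintype.sum_prod_type, ← hfp m]
      have hfv : (∑ i : Fin K × Fin Q, ‖V i.2 m i.1‖ ^ 2) =
          ∑ k : Fin K, ∑ q : Fin Q, ‖(V q) m k‖ ^ 2 := by
        rw [Fintype.sum_prod_type]
      rw [hfw, hfv] at this
      exact this
    calc (Real.sqrt (p m))⁻¹ *
          (∑ k : Fin K, ∑ q : Fin Q, ((starRingEnd ℂ) (W q m k) * V q m k).re)
        ≤ (Real.sqrt (p m))⁻¹ * (Real.sqrt (p m) *
            Real.sqrt (∑ k : Fin K, ∑ q : Fin Q, ‖(V q) m k‖ ^ 2)) :=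
          mul_le_mul_of_nonneg_left hcs (inv_nonneg.mpr (Real.sqrt_nonneg _))
      _ = Real.sqrt (∑ k : Fin K, ∑ q : Fin Q, ‖(V q) m k‖ ^ 2) := by
          rw [← mul_assoc, inv_mul_cancel₀ (hsq m), one_mul]
  calc ∑ m : Fin M, Real.sqrt (p m) = (∑ q, Matrix.trace ((W q)ᴴ * E * W q)).re := hLHS.symm
    _ = (∑ q, Matrix.trace ((W q)ᴴ * E * V q)).re := by rw [hTeq]
    _ ≤ _ := hRHS
end

section
/- Let h ∈ ℂ^M be a nonzero vector, let c ∈ ℂ, and let m̂ be an index maximizing |h_m|. Define w* ∈ ℂ^M by w*_{m̂} = c h_{m̂}^* / |h_{m̂}|² and w*_m = 0 for m ≠ m̂. Then Σ_m h_m w*_m = c, Σ_m |w*_m| = |c| / max_m |h_m|, and every w ∈ ℂ^M with Σ_m h_m w_m = c satisfies Σ_m |w_m| ≥ |c| / max_m |h_m|. Hence in a narrowband single-user system without per-antenna power constraints, the precoder minimizing the PA power consumption allocates all power to an antenna with the largest channel gain. -/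
open BigOperators

/-- Narrowband single-user: the precoder putting all power on an antenna with the largest
channel gain satisfies the constraint, has PA objective `|c|/max_m |h_m|`, and every
feasible precoder has PA objective at least that value. -/
theorem stmt3 (M : ℕ) (h : Fin M → ℂ) (hh : h ≠ 0) (c : ℂ)
    (mhat : Fin M) (hmax : ∀ m, ‖h m‖ ≤ ‖h mhat‖)
    (wstar : Fin M → ℂ)
    (hwstar : wstar = fun m =>
      if m = mhat then c * (starRingEnd ℂ) (h mhat) / (‖h mhat‖ ^ 2 : ℝ) else 0) :
    (∑ m : Fin M, h m * wstar m = c) ∧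
      (∑ m : Fin M, ‖wstar m‖ = ‖c‖ / ‖h mhat‖) ∧
      (∀ w : Fin M → ℂ, ∑ m : Fin M, h m * w m = c →
        ‖c‖ / ‖h mhat‖ ≤ ∑ m : Fin M, ‖w m‖) := by
  have hne : h mhat ≠ 0 := by
    intro h0
    apply hh
    funext m
    have := hmax m
    rw [h0, norm_zero] at this
    exact norm_eq_zero.mp (le_antisymm this (norm_nonneg _))
  have habs : ‖h mhat‖ ≠ 0 := norm_ne_zero_iff.mpr hne
  have hsq : ((‖h mhat‖ ^ 2 : ℝ) : ℂ) = h mhat * (starRingEnd ℂ) (h mhat) := by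
    rw [Complex.mul_conj]
    push_cast [Complex.sq_norm]
    rfl
  subst hwstar
  refine ⟨?_, ?_, ?_⟩
  · rw [Finset.sum_eq_single mhat]
    · beta_reduce; rw [if_pos rfl]
      rw [hsq]
      rw [mul_div_assoc']
      rw [mul_comm (h mhat) (c * (starRingEnd ℂ) (h mhat)), mul_assoc]
      rw [mul_comm ((starRingEnd ℂ) (h mhat)) (h mhat)]
      exact mul_div_cancel_right₀ c (mul_ne_zero hne (star_ne_zero.mpr hne))
    · intro m _ hm; simp [hm]
    · simp
  · rw [Finset.sum_eq_single mhat]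
    · beta_reduce; rw [if_pos rfl]
      rw [norm_div, norm_mul]
      field_simp [Complex.norm_conj, sq]
      simp only [Complex.norm_conj, Complex.norm_real, norm_pow, norm_norm]
      ring
    · intro m _ hm; simp [hm]
    · simp
  · intro w hw
    rw [div_le_iff₀ (lt_of_le_of_ne (norm_nonneg _) (Ne.symm habs))]
    calc ‖c‖ = ‖∑ m, h m * w m‖ := by rw [hw]
      _ ≤ ∑ m, ‖h m * w m‖ := norm_sum_le _ _
      _ ≤ ∑ m, ‖w m‖ * ‖h mhat‖ := by
          apply Finset.sum_le_sum
          intro m _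
          rw [norm_mul, mul_comm]
          exact mul_le_mul_of_nonneg_left (hmax m) (norm_nonneg _)
      _ = (∑ m, ‖w m‖) * ‖h mhat‖ := by
          rw [Finset.sum_mul]
end

section
/- Let h ∈ ℂ^M be nonzero, let c ∈ ℂ with c ≠ 0, and suppose the maximum of |h_m| is attained at a unique index m̂, i.e., |h_m| < |h_{m̂}| for all m ≠ m̂. Then every minimizer w of Σ_m |w_m| over the set {w ∈ ℂ^M : Σ_m h_m w_m = c} satisfies w_m = 0 for all m ≠ m̂ and w_{m̂} = c / h_{m̂}; i.e., the optimal narrowband single-user precoder uses only the antenna with the strongest channel gain and is unique. -/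
open BigOperators

/-- If the maximal channel gain is attained at a unique antenna, every minimizer of the
PA objective subject to the zero-forcing constraint uses only that antenna, with
coefficient `c / h_mhat`. -/
theorem stmt4 (M : ℕ) (h : Fin M → ℂ) (hh : h ≠ 0) (c : ℂ) (hc : c ≠ 0)
    (mhat : Fin M) (hmax : ∀ m, m ≠ mhat → ‖h m‖ < ‖h mhat‖)
    (w : Fin M → ℂ)
    (hfeas : ∑ m : Fin M, h m * w m = c)
    (hmin : ∀ v : Fin M → ℂ, ∑ m : Fin M, h m * v m = c →
      ∑ m : Fin M, ‖w m‖ ≤ ∑ m : Fin M, ‖v m‖) :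
    (∀ m, m ≠ mhat → w m = 0) ∧ w mhat = c / h mhat := by
  have hmhat : h mhat ≠ 0 := by
    intro h0
    apply hh
    funext m
    by_cases hm : m = mhat
    · simp [hm, h0]
    · have := hmax m hm
      rw [h0, norm_zero] at this
      exact absurd this (not_lt.2 (norm_nonneg _))
  have habs : 0 < ‖h mhat‖ := norm_pos_iff.mpr hmhat
  set v : Fin M → ℂ := Function.update (0 : Fin M → ℂ) mhat (c / h mhat) with hv
  have hvsum : ∑ m, h m * v m = c := by
    rw [Finset.sum_eq_single mhat]
    · simp [hv, Function.update_self, mul_div_cancel₀ _ hmhat]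
    · intro b _ hb; simp [hv, Function.update_of_ne hb]
    · simp
  have hvabs : ∑ m, ‖v m‖ = ‖c‖ / ‖h mhat‖ := by
    rw [Finset.sum_eq_single mhat]
    · simp [hv, map_div₀]
    · intro b _ hb; simp [hv, Function.update_of_ne hb]
    · simp
  have hS : ∑ m, ‖w m‖ ≤ ‖c‖ / ‖h mhat‖ := by
    rw [← hvabs]; exact hmin v hvsum
  have hc1 : ‖c‖ ≤ ∑ m, ‖h m‖ * ‖w m‖ := by
    calc ‖c‖ = ‖∑ m, h m * w m‖ := by rw [hfeas]
    _ ≤ ∑ m, ‖h m * w m‖ := norm_sum_le _ _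
    _ = ∑ m, ‖h m‖ * ‖w m‖ := by simp [map_mul]
  have hmulS : ‖h mhat‖ * ∑ m, ‖w m‖ ≤ ‖c‖ := by
    have := mul_le_mul_of_nonneg_left hS habs.le
    rwa [mul_div_cancel₀ _ (ne_of_gt habs)] at this
  have hT : ∑ m, (‖h mhat‖ - ‖h m‖) * ‖w m‖ = 0 := by
    have h1 : ∑ m, (‖h mhat‖ - ‖h m‖) * ‖w m‖
        = ‖h mhat‖ * (∑ m, ‖w m‖)
          - ∑ m, ‖h m‖ * ‖w m‖ := by
      rw [Finset.mul_sum, ← Finset.sum_sub_distrib]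
      congr 1; funext m; ring
    have hle : ∑ m, (‖h mhat‖ - ‖h m‖) * ‖w m‖ ≤ 0 := by
      rw [h1]; linarith
    have hge : 0 ≤ ∑ m, (‖h mhat‖ - ‖h m‖) * ‖w m‖ := by
      apply Finset.sum_nonneg
      intro m _
      apply mul_nonneg _ (norm_nonneg _)
      by_cases hm : m = mhat
      · simp [hm]
      · linarith [hmax m hm]
    linarith
  have hterm : ∀ m ∈ Finset.univ,
      (‖h mhat‖ - ‖h m‖) * ‖w m‖ = 0 := by
    rw [← Finset.sum_eq_zero_iff_of_nonneg]
    · exact hT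
    · intro m _
      apply mul_nonneg _ (norm_nonneg _)
      by_cases hm : m = mhat
      · simp [hm]
      · linarith [hmax m hm]
  have hzero : ∀ m, m ≠ mhat → w m = 0 := by
    intro m hm
    have := hterm m (Finset.mem_univ m)
    have hpos : 0 < ‖h mhat‖ - ‖h m‖ := by linarith [hmax m hm]
    have : ‖w m‖ = 0 := by
      rcases mul_eq_zero.1 this with h' | h'
      · exact absurd h' (ne_of_gt hpos)
      · exact h'
    exact norm_eq_zero.1 this
  refine ⟨hzero, ?_⟩
  have : ∑ m, h m * w m = h mhat * w mhat := by
    rw [Finset.sum_eq_single mhat]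
    · intro b _ hb; rw [hzero b hb, mul_zero]
    · simp
  rw [this] at hfeas
  field_simp
  rw [mul_comm]
  exact hfeas
end

section
/- Let T > 0 and p > 0 be real numbers and K a nonnegative integer. Define M̂ = ⌈(K + (K² + 4T/p)^{1/2})/2⌉. Then M̂ > K, T/(M̂(M̂−K)) ≤ p, and every integer n with K < n < M̂ satisfies T/(n(n−K)) > p. In other words, M̂ is the minimal integer number of active antennas for which the asymptotic per-antenna transmit power T/(n(n−K)) does not exceed the per-antenna power limit p. -/
/-- `M̂ = ⌈(K + √(K² + 4T/p))/2⌉` is the minimal integer number of active antennas for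
which the asymptotic per-antenna transmit power `T/(n(n−K))` does not exceed `p`. -/
theorem stmt8 (T p : ℝ) (hT : 0 < T) (hp : 0 < p) (K : ℕ)
    (Mhat : ℕ) (hMhat : Mhat = ⌈((K : ℝ) + Real.sqrt ((K : ℝ) ^ 2 + 4 * T / p)) / 2⌉₊) :
    K < Mhat ∧
      T / ((Mhat : ℝ) * ((Mhat : ℝ) - (K : ℝ))) ≤ p ∧
      ∀ n : ℕ, K < n → n < Mhat → p < T / ((n : ℝ) * ((n : ℝ) - (K : ℝ))) := by
  set s : ℝ := Real.sqrt ((K : ℝ) ^ 2 + 4 * T / p) with hs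
  set c : ℝ := T / p with hc
  have hcp : c * p = T := div_mul_cancel₀ T (ne_of_gt hp)
  have hc0 : 0 < c := div_pos hT hp
  have harg : (0:ℝ) ≤ (K : ℝ) ^ 2 + 4 * T / p := by positivity
  have hs0 : 0 ≤ s := Real.sqrt_nonneg _
  have hs2 : s ^ 2 = (K : ℝ) ^ 2 + 4 * c := by
    rw [hs, Real.sq_sqrt harg]; ring
  have hsK : (K : ℝ) < s := by nlinarith [mul_nonneg hs0 (Nat.cast_nonneg K : (0:ℝ) ≤ K)]
  set x : ℝ := ((K : ℝ) + s) / 2 with hx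
  have hxK : (K : ℝ) < x := by rw [hx]; linarith
  have hx0 : (0:ℝ) < x := lt_of_le_of_lt (Nat.cast_nonneg K) hxK
  have hxeq : x * (x - (K : ℝ)) = c := by
    have h1 : x * (x - (K : ℝ)) = (s ^ 2 - (K : ℝ) ^ 2) / 4 := by rw [hx]; ring
    rw [h1, hs2]; ring
  have hxM : x ≤ (Mhat : ℝ) := by rw [hMhat]; exact Nat.le_ceil x
  have hKM : K < Mhat := by exact_mod_cast hxK.trans_le hxM
  refine ⟨hKM, ?_, ?_⟩
  · have hKMr : (K : ℝ) < (Mhat : ℝ) := hxK.trans_le hxM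
    have hden : 0 < (Mhat : ℝ) * ((Mhat : ℝ) - (K : ℝ)) :=
      mul_pos (lt_of_le_of_lt (Nat.cast_nonneg K) hKMr) (sub_pos.mpr hKMr)
    rw [div_le_iff₀ hden]
    have hprod : 0 ≤ ((Mhat : ℝ) - x) * ((Mhat : ℝ) + x - (K : ℝ)) :=
      mul_nonneg (sub_nonneg.mpr hxM) (by linarith)
    nlinarith [hxeq, hcp, hprod]
  · intro n hKn hnM
    have hnx : (n : ℝ) < x := by
      have h1 : (Mhat : ℝ) < x + 1 := by
        rw [hMhat]; exact Nat.ceil_lt_add_one (le_of_lt hx0)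
      have h2 : (n : ℝ) + 1 ≤ (Mhat : ℝ) := by exact_mod_cast hnM
      linarith
    have hKnR : (K : ℝ) < (n : ℝ) := by exact_mod_cast hKn
    have hden : 0 < (n : ℝ) * ((n : ℝ) - (K : ℝ)) :=
      mul_pos (lt_of_le_of_lt (Nat.cast_nonneg K) hKnR) (sub_pos.mpr hKnR)
    rw [lt_div_iff₀ hden]
    have hprod : 0 < (x - (n : ℝ)) * (x + (n : ℝ) - (K : ℝ)) :=
      mul_pos (sub_pos.mpr hnx) (by linarith)
    nlinarith [hxeq, hcp, hprod]
end

section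
/- Let t > 0, C > 0, K > 0 be real numbers and p_fix ∈ ℝ. The function f(x) = t·(x/(x−K))^{1/2} + p_fix + C·x is strictly convex on the open interval (K, ∞); indeed, for every x > K its second derivative equals (tK/4)·(4x−K)/(x^{3/2}(x−K)^{5/2}), which is strictly positive. -/
/-- The asymptotic BS power consumption `f(x) = t√(x/(x−K)) + p_fix + Cx` is strictly
convex on `(K, ∞)`, and its second derivative at every `x > K` equals
`(tK/4)(4x−K)/(x^{3/2}(x−K)^{5/2})`, which is strictly positive. -/
theorem stmt9 (t C K pfix : ℝ) (ht : 0 < t) (hC : 0 < C) (hK : 0 < K)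
    (f : ℝ → ℝ) (hf : f = fun x => t * Real.sqrt (x / (x - K)) + pfix + C * x) :
    StrictConvexOn ℝ (Set.Ioi K) f ∧
      ∀ x : ℝ, K < x →
        iteratedDeriv 2 f x =
            t * K / 4 * (4 * x - K) / (x ^ ((3 : ℝ) / 2) * (x - K) ^ ((5 : ℝ) / 2)) ∧
          0 < t * K / 4 * (4 * x - K) / (x ^ ((3 : ℝ) / 2) * (x - K) ^ ((5 : ℝ) / 2)) := by
  set F' : ℝ → ℝ := fun y => t * (-K / 2) * (Real.sqrt y * ((y - K) * Real.sqrt (y - K)))⁻¹ + C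
    with hF'
  -- first derivative
  have hf1 : ∀ x, K < x → HasDerivAt f (F' x) x := by
    intro x hx
    have hx0 : 0 < x := hK.trans hx
    have hxK : 0 < x - K := sub_pos.2 hx
    have hsx0 : 0 < Real.sqrt x := Real.sqrt_pos.2 hx0
    have hs0 : 0 < Real.sqrt (x - K) := Real.sqrt_pos.2 hxK
    have hu : HasDerivAt (fun y : ℝ => y / (y - K)) (-K / (x - K) ^ 2) x := by
      have h := (hasDerivAt_id x).div ((hasDerivAt_id x).sub_const K) hxK.ne'
      convert h using 1
      · rfl
      · rfl
      · rfl
      · simp only [id]; ring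
    have hupos : 0 < x / (x - K) := div_pos hx0 hxK
    have hsqrt : HasDerivAt (fun y : ℝ => Real.sqrt (y / (y - K)))
        (1 / (2 * Real.sqrt (x / (x - K))) * (-K / (x - K) ^ 2)) x :=
      (Real.hasDerivAt_sqrt hupos.ne').comp x hu
    have hmain : HasDerivAt (fun y : ℝ => t * Real.sqrt (y / (y - K)) + pfix + C * y)
        (t * (1 / (2 * Real.sqrt (x / (x - K))) * (-K / (x - K) ^ 2)) + C) x := by
      have hid : HasDerivAt (fun y : ℝ => C * y) C x := by
        simpa using (hasDerivAt_id x).const_mul C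
      exact ((hsqrt.const_mul t).add_const pfix).add hid
    rw [hf]
    convert hmain using 1
    have hsq : Real.sqrt (x / (x - K)) = Real.sqrt x / Real.sqrt (x - K) :=
      Real.sqrt_div hx0.le _
    rw [hF', hsq]
    beta_reduce
    obtain ⟨sx, hsx2, hsxpos⟩ : ∃ sx : ℝ, sx ^ 2 = x ∧ 0 < sx :=
      ⟨Real.sqrt x, Real.sq_sqrt hx0.le, hsx0⟩
    obtain ⟨s, hs2, hspos⟩ : ∃ s : ℝ, s ^ 2 = x - K ∧ 0 < s :=
      ⟨Real.sqrt (x - K), Real.sq_sqrt hxK.le, hs0⟩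
    rw [show Real.sqrt x = sx from by rw [← hsx2]; exact (Real.sqrt_sq hsxpos.le),
        show Real.sqrt (x - K) = s from by rw [← hs2]; exact (Real.sqrt_sq hspos.le)]
    have hKeq : K = sx ^ 2 - s ^ 2 := by rw [hsx2, hs2]; ring
    subst hsx2
    subst hKeq
    field_simp
    ring
  -- second derivative
  have hf2 : ∀ x, K < x → HasDerivAt F'
      (t * K / 4 * (4 * x - K) / (x ^ ((3 : ℝ) / 2) * (x - K) ^ ((5 : ℝ) / 2))) x := by
    intro x hx
    have hx0 : 0 < x := hK.trans hx
    have hxK : 0 < x - K := sub_pos.2 hx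
    have hsx0 : 0 < Real.sqrt x := Real.sqrt_pos.2 hx0
    have hs0 : 0 < Real.sqrt (x - K) := Real.sqrt_pos.2 hxK
    have hden : HasDerivAt (fun y : ℝ => Real.sqrt y * ((y - K) * Real.sqrt (y - K)))
        (1 / (2 * Real.sqrt x) * ((x - K) * Real.sqrt (x - K)) +
          Real.sqrt x * (1 * Real.sqrt (x - K) + (x - K) * (1 / (2 * Real.sqrt (x - K))))) x := by
      have h1 : HasDerivAt Real.sqrt (1 / (2 * Real.sqrt x)) x := Real.hasDerivAt_sqrt hx0.ne'
      have h2 : HasDerivAt (fun y : ℝ => Real.sqrt (y - K)) (1 / (2 * Real.sqrt (x - K)) * 1) x :=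
        (Real.hasDerivAt_sqrt hxK.ne').comp x ((hasDerivAt_id x).sub_const K)
      have h3 : HasDerivAt (fun y : ℝ => y - K) 1 x := (hasDerivAt_id x).sub_const K
      have := h1.mul (h3.mul (by simpa using h2))
      simp at this ⊢
      exact this
    have hne : Real.sqrt x * ((x - K) * Real.sqrt (x - K)) ≠ 0 := by positivity
    have hinv := hden.inv hne
    have := (hinv.const_mul (t * (-K / 2))).add_const C
    convert this using 1
    · rfl
    · rfl
    · rfl
    have hr1 : x ^ ((3 : ℝ) / 2) = Real.sqrt x ^ 3 := by
      rw [Real.sqrt_eq_rpow, ← Real.rpow_natCast (x ^ ((1:ℝ)/2)) 3, ← Real.rpow_mul hx0.le]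
      norm_num
    have hr2 : (x - K) ^ ((5 : ℝ) / 2) = Real.sqrt (x - K) ^ 5 := by
      rw [Real.sqrt_eq_rpow, ← Real.rpow_natCast ((x - K) ^ ((1:ℝ)/2)) 5, ← Real.rpow_mul hxK.le]
      norm_num
    rw [hr1, hr2]
    obtain ⟨sx, hsx2, hsxpos⟩ : ∃ sx : ℝ, sx ^ 2 = x ∧ 0 < sx :=
      ⟨Real.sqrt x, Real.sq_sqrt hx0.le, hsx0⟩
    obtain ⟨s, hs2, hspos⟩ : ∃ s : ℝ, s ^ 2 = x - K ∧ 0 < s :=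
      ⟨Real.sqrt (x - K), Real.sq_sqrt hxK.le, hs0⟩
    rw [show Real.sqrt x = sx from by rw [← hsx2]; exact (Real.sqrt_sq hsxpos.le),
        show Real.sqrt (x - K) = s from by rw [← hs2]; exact (Real.sqrt_sq hspos.le)]
    have hKeq : K = sx ^ 2 - s ^ 2 := by rw [hsx2, hs2]; ring
    subst hsx2
    subst hKeq
    field_simp
    ring
  have hderiv1 : ∀ x, K < x → deriv f x = F' x := fun x hx => (hf1 x hx).deriv
  have hderiv2 : ∀ x, K < x → deriv (deriv f) x =
      t * K / 4 * (4 * x - K) / (x ^ ((3 : ℝ) / 2) * (x - K) ^ ((5 : ℝ) / 2)) := by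
    intro x hx
    have hev : deriv f =ᶠ[nhds x] F' :=
      Filter.eventuallyEq_of_mem (isOpen_Ioi.mem_nhds hx) fun y hy => hderiv1 y hy
    rw [hev.deriv_eq]
    exact (hf2 x hx).deriv
  have hpos : ∀ x, K < x →
      0 < t * K / 4 * (4 * x - K) / (x ^ ((3 : ℝ) / 2) * (x - K) ^ ((5 : ℝ) / 2)) := by
    intro x hx
    have hx0 : 0 < x := hK.trans hx
    have hxK : 0 < x - K := sub_pos.2 hx
    have h4 : 0 < 4 * x - K := by linarith
    apply div_pos
    · have : 0 < t * K / 4 := by positivity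
      exact mul_pos this h4
    · exact mul_pos (Real.rpow_pos_of_pos hx0 _) (Real.rpow_pos_of_pos hxK _)
  constructor
  · apply strictConvexOn_of_deriv2_pos (convex_Ioi K)
    · intro x hx
      exact (hf1 x hx).continuousAt.continuousWithinAt
    · intro x hx
      rw [interior_Ioi] at hx
      have : (deriv^[2] f) x = deriv (deriv f) x := by
        simp [Function.iterate_succ_apply']
      rw [this, hderiv2 x hx]
      exact hpos x hx
  · intro x hx
    refine ⟨?_, hpos x hx⟩
    rw [iteratedDeriv_succ, iteratedDeriv_one]
    exact hderiv2 x hx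
end
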